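/- Let X = ℓ², let (e_n) be the canonical basis, and define f_n : ℓ² → ℝ by f_n(x) = 2ⁿ ⟨e_n, x⟩². Then the function I_f(x) = Σ_{n} 2^{-n} f_n(x) = ‖x‖² is Fréchet differentiable with ∇I_f(x) = 2x, each f_n is differentiable with ∇f_n(x) = 2ⁿ⁺¹ ⟨x, e_n⟩ e_n, and there exists x ∈ ℓ² (for instance x = (1/n)_{n≥1}) such that Σ_n 2^{-n} ‖∇f_n(x)‖ = 2 Σ_n |⟨x, e_n⟩| = +∞. -/

import Mathlib

open scoped RealInnerProductSpace
noncomputable section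

/-- The Hilbert space `ℓ²` of square-summable real sequences. -/
abbrev ellTwo : Type := lp (fun _ : ℕ => ℝ) 2

/-- The canonical orthonormal basis of `ℓ²`. -/
def e (n : ℕ) : ellTwo := lp.single 2 n (1 : ℝ)

/-- The integrand `f_n(x) = 2ⁿ ⟨e_n, x⟩²`. -/
def fn (n : ℕ) (x : ellTwo) : ℝ := (2 : ℝ) ^ n * ⟪e n, x⟫ ^ 2

/-- The integral function `I_f(x) = Σ_n 2^{-n} f_n(x)` (integral w.r.t. the measure
`μ({n}) = 2^{-n}` on `ℕ`). -/
def If (x : ellTwo) : ℝ := ∑' n : ℕ, (2 : ℝ) ^ (-(n : ℤ)) * fn n x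

lemma inner_e (n : ℕ) (x : ellTwo) : ⟪e n, x⟫ = x n := by
  simpa [e] using lp.inner_single_left (𝕜 := ℝ) n (1 : ℝ) x

lemma If_eq (x : ellTwo) : If x = ‖x‖ ^ 2 := by
  have hx : ∀ n : ℕ, (2 : ℝ) ^ (-(n : ℤ)) * fn n x = x n * x n := by
    intro n
    have h2 : (2 : ℝ) ^ (-(n : ℤ)) * (2 : ℝ) ^ n = 1 := by
      rw [← zpow_natCast (2 : ℝ) n, ← zpow_add₀ (two_ne_zero)]
      simp
    simp only [fn, inner_e, ← mul_assoc, h2, one_mul, sq]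
  have : If x = ∑' n : ℕ, x n * x n := by
    unfold If; exact tsum_congr hx
  rw [this, ← real_inner_self_eq_norm_sq]
  rw [lp.inner_eq_tsum]
  rfl

/-- `I_f(x) = ‖x‖²` is Fréchet differentiable with `∇I_f(x) = 2x`, each `f_n` is
differentiable with `∇f_n(x) = 2ⁿ⁺¹⟨x,e_n⟩ e_n`, and yet there is `x ∈ ℓ²` (e.g.
`x = (1/n)_n`) for which `Σ_n 2^{-n} ‖∇f_n(x)‖ = 2 Σ_n |⟨x,e_n⟩| = +∞`, i.e. the series of
norms of the subgradients is not summable. -/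
theorem If_eq_norm_sq_hasFDeriv_and_not_summable :
    (∀ x : ellTwo, If x = ‖x‖ ^ 2) ∧
    (∀ x : ellTwo, HasFDerivAt If ((2 : ℝ) • (innerSL ℝ x)) x) ∧
    (∀ (n : ℕ) (x : ellTwo),
      HasFDerivAt (fn n) (innerSL ℝ (((2 : ℝ) ^ (n + 1) * ⟪x, e n⟫) • e n)) x) ∧
    (∃ x : ellTwo,
      ¬ Summable (fun n : ℕ =>
        (2 : ℝ) ^ (-(n : ℤ)) * ‖((2 : ℝ) ^ (n + 1) * ⟪x, e n⟫) • e n‖)) := by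
  refine ⟨If_eq, ?_, ?_, ?_⟩
  · intro x
    have h : HasFDerivAt (fun y : ellTwo => ‖y‖ ^ 2) ((2 : ℝ) • (innerSL ℝ x)) x := by
      have := (hasStrictFDerivAt_norm_sq x).hasFDerivAt
      convert! this using 1
      ext y
      simp [two_smul]
    have hIf : If = fun y : ellTwo => ‖y‖ ^ 2 := funext If_eq
    rw [hIf]
    exact h
  · intro n x
    have h0 : HasFDerivAt (fun y : ellTwo => ⟪e n, y⟫) (innerSL ℝ (e n)) x :=
      (innerSL ℝ (e n)).hasFDerivAt
    have h1 := (h0.mul h0).const_mul ((2 : ℝ) ^ n)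
    have hfn : fn n = fun y : ellTwo => (2 : ℝ) ^ n * (⟪e n, y⟫ * ⟪e n, y⟫) := by
      funext y; rw [fn, sq]
    rw [hfn]
    convert! h1 using 1
    ext y
    simp only [innerSL_apply_apply, ContinuousLinearMap.coe_smul', Pi.smul_apply, smul_eq_mul,
      ContinuousLinearMap.add_apply]
    rw [real_inner_smul_left]
    have : ⟪x, e n⟫ = ⟪e n, x⟫ := real_inner_comm _ _
    rw [this]
    ring
  · -- the sequence x n = 1/n
    have hmem : Memℓp (fun n : ℕ => 1 / (n : ℝ)) 2 := by
      apply memℓp_gen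
      have hs : Summable (fun n : ℕ => 1 / (n : ℝ) ^ 2) :=
        Real.summable_one_div_nat_pow.mpr one_lt_two
      apply hs.congr
      intro n
      rw [Real.norm_eq_abs]
      have : |1 / (n : ℝ)| = 1 / (n : ℝ) := abs_of_nonneg (by positivity)
      rw [ENNReal.toReal_ofNat, this]
      rw [show ((2:ℝ)) = ((2:ℕ):ℝ) by norm_num, Real.rpow_natCast]
      rw [div_pow, one_pow]
    refine ⟨⟨fun n : ℕ => 1 / (n : ℝ), hmem⟩, ?_⟩
    intro hsum
    have hx : ∀ n : ℕ, ⟪(⟨fun n : ℕ => 1 / (n : ℝ), hmem⟩ : ellTwo), e n⟫ = 1 / (n : ℝ) := by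
      intro n
      rw [real_inner_comm, inner_e]
    have hterm : ∀ n : ℕ,
        (2 : ℝ) ^ (-(n : ℤ)) *
          ‖((2 : ℝ) ^ (n + 1) * ⟪(⟨fun n : ℕ => 1 / (n : ℝ), hmem⟩ : ellTwo), e n⟫) • e n‖
          = 2 * (1 / (n : ℝ)) := by
      intro n
      rw [hx, norm_smul]
      have hnorm : ‖e n‖ = 1 := by
        have := lp.norm_single (p := 2) (E := fun _ : ℕ => ℝ) (by norm_num)
          n (1 : ℝ)
        simpa [e] using this
      rw [hnorm, mul_one, Real.norm_eq_abs]
      have hpos : (0 : ℝ) ≤ (2 : ℝ) ^ (n + 1) * (1 / (n : ℝ)) := by positivity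
      rw [abs_of_nonneg hpos]
      have h2 : (2 : ℝ) ^ (-(n : ℤ)) * (2 : ℝ) ^ (n + 1) = 2 := by
        rw [← zpow_natCast (2 : ℝ) (n + 1), ← zpow_add₀ (two_ne_zero)]
        norm_num
      rw [← mul_assoc, h2]
    rw [show (fun n : ℕ =>
        (2 : ℝ) ^ (-(n : ℤ)) *
          ‖((2 : ℝ) ^ (n + 1) * ⟪(⟨fun n : ℕ => 1 / (n : ℝ), hmem⟩ : ellTwo), e n⟫) • e n‖)
        = fun n : ℕ => 2 * (1 / (n : ℝ)) from funext hterm] at hsum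
    have : Summable (fun n : ℕ => 1 / (n : ℝ)) := by
      have := hsum.mul_left (1 / 2)
      apply this.congr
      intro n; ring
    exact Real.not_summable_one_div_natCast this
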